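/- arXiv:1403.1825 — 4 statements merged into one kernel-verified Lean document; each statement's English description precedes it below -/
import Mathlib

section
/- Let m, n be natural numbers with m ≤ n and let x be a real number. Then (x)_n · ∑_{j=0}^{n} [((-n)_j / j!) · (-j)_m · (x+j)_m] = (-1)^m · (x)_{2m} · (-n)_m · (-m)_{n-m}. -/
/-- The Pochhammer symbol (rising factorial) `(x)_n = x(x+1)⋯(x+n-1)` for real `x`. -/
noncomputable def poch (x : ℝ) (n : ℕ) : ℝ := (ascPochhammer ℝ n).eval x

lemma poch_zero (x : ℝ) : poch x 0 = 1 := by simp [poch]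

lemma poch_succ (x : ℝ) (k : ℕ) : poch x (k+1) = poch x k * (x + k) := by
  simp [poch, ascPochhammer_succ_right]

lemma poch_succ_left (x : ℝ) (k : ℕ) : poch x (k+1) = x * poch (x+1) k := by
  simp [poch, ascPochhammer_succ_left]

lemma poch_add (x : ℝ) (a b : ℕ) : poch x (a+b) = poch x a * poch (x + a) b := by
  have := ascPochhammer_mul ℝ a b
  have h := congrArg (Polynomial.eval x) this
  simpa [poch, Polynomial.eval_comp] using h.symm

lemma poch_neg_nat (a : ℕ) : ∀ k : ℕ, poch (-(a:ℝ)) k = (-1)^k * a.descFactorial k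
  | 0 => by simp [poch_zero]
  | k+1 => by
    rw [poch_succ, poch_neg_nat a k, Nat.descFactorial_succ]
    rcases lt_or_ge k a with h | h
    · have : ((a - k : ℕ) : ℝ) = (a : ℝ) - k := by
        rw [Nat.cast_sub h.le]
      push_cast [this]
      ring
    · have h0 : (a - k : ℕ) = 0 := Nat.sub_eq_zero_of_le h
      rcases eq_or_lt_of_le h with h' | h'
      · subst h'
        simp [h0]
      · have : a.descFactorial k = 0 := Nat.descFactorial_eq_zero_iff_lt.mpr h'
        simp [this, h0]

lemma poch_diff (z : ℝ) (m : ℕ) :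
    poch z (m+1) - poch (z+1) (m+1) = -((m+1) * poch (z+1) m) := by
  rw [poch_succ_left, poch_succ (z+1) m]
  ring

lemma pascal_diff (f : ℕ → ℝ) (N : ℕ) :
    ∑ k ∈ Finset.range (N+2), (-1:ℝ)^k * ((N+1).choose k) * f k =
    ∑ k ∈ Finset.range (N+1), (-1:ℝ)^k * (N.choose k) * (f k - f (k+1)) := by
  have hA : ∑ k ∈ Finset.range (N+1), (-1:ℝ)^k * (N.choose k) * f k
      = (∑ k ∈ Finset.range N, (-1:ℝ)^(k+1) * (N.choose (k+1)) * f (k+1)) + f 0 := by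
    rw [Finset.sum_range_succ']
    simp
  rw [Finset.sum_range_succ']
  have hsplit : ∀ k ∈ Finset.range (N+1),
      (-1:ℝ)^(k+1) * ((N+1).choose (k+1)) * f (k+1)
      = (-1:ℝ)^(k+1) * (N.choose k) * f (k+1) + (-1:ℝ)^(k+1) * (N.choose (k+1)) * f (k+1) := by
    intro k _
    rw [Nat.choose_succ_succ]
    push_cast
    ring
  rw [Finset.sum_congr rfl hsplit, Finset.sum_add_distrib]
  have hS2 : ∑ k ∈ Finset.range (N+1), (-1:ℝ)^(k+1) * (N.choose (k+1)) * f (k+1)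
      = (∑ k ∈ Finset.range (N+1), (-1:ℝ)^k * (N.choose k) * f k) - f 0 := by
    rw [Finset.sum_range_succ]
    simp only [Nat.choose_succ_self, Nat.cast_zero, mul_zero, zero_mul, add_zero]
    rw [hA]
    ring
  rw [hS2]
  have hRHS : ∑ k ∈ Finset.range (N+1), (-1:ℝ)^k * (N.choose k) * (f k - f (k+1))
      = (∑ k ∈ Finset.range (N+1), (-1:ℝ)^k * (N.choose k) * f k)
        + ∑ k ∈ Finset.range (N+1), (-1:ℝ)^(k+1) * (N.choose k) * f (k+1) := by
    rw [← Finset.sum_add_distrib]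
    apply Finset.sum_congr rfl
    intro k _
    ring
  rw [hRHS]
  simp only [Nat.choose_zero_right, Nat.cast_one, pow_zero]
  ring

lemma key_diff : ∀ (N m : ℕ) (y : ℝ),
    ∑ k ∈ Finset.range (N+1), (-1:ℝ)^k * (N.choose k) * poch (y+k) m
    = (-1)^N * m.descFactorial N * poch (y+N) (m-N)
  | 0, m, y => by simp
  | N+1, m, y => by
    rw [show N+1+1 = N+2 from rfl, pascal_diff]
    rcases m with _ | m'
    · simp [poch_zero]
    · have hterm : ∀ k ∈ Finset.range (N+1),
          (-1:ℝ)^k * (N.choose k) * (poch (y+k) (m'+1) - poch (y+((k+1:ℕ):ℝ)) (m'+1))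
          = -((m'+1) * ((-1:ℝ)^k * (N.choose k) * poch ((y+1)+k) m')) := by
        intro k _
        have h1 : (y + ((k+1:ℕ):ℝ)) = (y + k) + 1 := by push_cast; ring
        have h2 : ((y+k) + 1 : ℝ) = (y+1) + k := by ring
        rw [h1, poch_diff (y+k) m', h2]
        ring
      rw [Finset.sum_congr rfl hterm]
      have hI := key_diff N m' (y+1)
      have hsum : ∑ k ∈ Finset.range (N+1),
          -((m'+1:ℝ) * ((-1:ℝ)^k * (N.choose k) * poch ((y+1)+k) m'))
          = -((m'+1:ℝ) * ∑ k ∈ Finset.range (N+1), (-1:ℝ)^k * (N.choose k) * poch ((y+1)+k) m') := by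
        rw [Finset.mul_sum, ← Finset.sum_neg_distrib]
      rw [hsum, hI, Nat.succ_descFactorial_succ, Nat.succ_sub_succ]
      have harg : ((y+1) + (N:ℝ)) = y + ((N+1:ℕ):ℝ) := by push_cast; ring
      rw [harg]
      push_cast
      ring

theorem stmt_0 (m n : ℕ) (hmn : m ≤ n) (x : ℝ) :
    poch x n *
      ∑ j ∈ Finset.range (n + 1),
        (poch (-(n : ℝ)) j / (Nat.factorial j : ℝ)) * poch (-(j : ℝ)) m * poch (x + j) m =
    (-1 : ℝ) ^ m * poch x (2 * m) * poch (-(n : ℝ)) m * poch (-(m : ℝ)) (n - m) := by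
  set N := n - m with hN
  have hnmN : m + N = n := Nat.add_sub_cancel' hmn
  -- rewrite each term of the sum
  have hterm : ∀ j ∈ Finset.range (n+1),
      (poch (-(n : ℝ)) j / (Nat.factorial j : ℝ)) * poch (-(j : ℝ)) m * poch (x + j) m
      = (-1:ℝ)^(j+m) * (n.choose j) * (j.choose m) * (Nat.factorial m) * poch (x+j) m := by
    intro j _
    rw [poch_neg_nat, poch_neg_nat, Nat.descFactorial_eq_factorial_mul_choose,
      Nat.descFactorial_eq_factorial_mul_choose]
    have hj : ((Nat.factorial j : ℝ)) ≠ 0 := by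
      exact_mod_cast (Nat.factorial_pos j).ne'
    field_simp
    push_cast
    ring
  rw [Finset.sum_congr rfl hterm]
  -- drop the terms with j < m
  have hsub : Finset.Ico m (n+1) ⊆ Finset.range (n+1) := by
    intro j hj
    simp only [Finset.mem_Ico] at hj
    exact Finset.mem_range.mpr hj.2
  have hzero : ∀ j ∈ Finset.range (n+1), j ∉ Finset.Ico m (n+1) →
      (-1:ℝ)^(j+m) * (n.choose j) * (j.choose m) * (Nat.factorial m) * poch (x+j) m = 0 := by
    intro j hj hj'
    have : j < m := by
      by_contra h
      exact hj' (Finset.mem_Ico.mpr ⟨le_of_not_gt h, Finset.mem_range.mp hj⟩)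
    rw [Nat.choose_eq_zero_of_lt this]
    simp
  rw [← Finset.sum_subset hsub hzero]
  rw [Finset.sum_Ico_eq_sum_range]
  have hrange : n + 1 - m = N + 1 := by omega
  rw [hrange]
  -- simplify the shifted terms
  have hterm2 : ∀ k ∈ Finset.range (N+1),
      (-1:ℝ)^((m+k)+m) * (n.choose (m+k)) * ((m+k).choose m) * (Nat.factorial m) * poch (x+((m+k:ℕ):ℝ)) m
      = ((n.choose m) * (Nat.factorial m)) * ((-1:ℝ)^k * (N.choose k) * poch ((x+m)+k) m) := by
    intro k hk
    have hkN : k ≤ N := Nat.le_of_lt_succ (Finset.mem_range.mp hk)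
    have hmkn : m + k ≤ n := by omega
    have hch : (n.choose (m+k)) * ((m+k).choose m) = n.choose m * (N.choose k) := by
      have := Nat.choose_mul (n := n) (Nat.le_add_right m k)
      rw [Nat.add_sub_cancel_left] at this
      rw [this, hN]
    have harg : (x + ((m+k:ℕ):ℝ)) = (x+m)+k := by push_cast; ring
    have hsign : (-1:ℝ)^((m+k)+m) = (-1:ℝ)^k := by
      rw [show (m+k)+m = k + 2*m by ring, pow_add, pow_mul]
      simp
    have hchR : ((n.choose (m+k) : ℝ)) * ((m+k).choose m) = (n.choose m : ℝ) * (N.choose k) := by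
      exact_mod_cast hch
    rw [harg, hsign]
    linear_combination (((-1:ℝ)^k) * (Nat.factorial m : ℝ) * poch ((x+m)+k) m) * hchR
  rw [Finset.sum_congr rfl hterm2, ← Finset.mul_sum, key_diff N m (x+m)]
  -- rewrite the RHS Pochhammers
  rw [poch_neg_nat, poch_neg_nat, Nat.descFactorial_eq_factorial_mul_choose n m]
  rcases le_or_gt N m with hNm | hNm
  · -- nondegenerate case
    have h2m : 2*m = n + (m - N) := by omega
    have hargn : ((x+(m:ℝ))+N) = x + n := by
      have : ((m:ℝ)) + N = n := by exact_mod_cast congrArg (Nat.cast : ℕ → ℝ) hnmN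
      rw [add_assoc, this]
    rw [h2m, poch_add, hargn]
    have hone : ((-1:ℝ))^(m*2) = 1 := by
      rw [mul_comm, pow_mul]
      norm_num
    push_cast
    ring_nf
    rw [hone, mul_one]
  · -- degenerate case : both sides vanish
    have hd : m.descFactorial N = 0 := Nat.descFactorial_eq_zero_iff_lt.mpr hNm
    rw [hd]
    push_cast
    ring
end

section
/- Let ρ be the complex matrix indexed by (Fin 2 × Fin 2) × (Fin 2 × Fin 2) with diagonal entries 1/6, 1/3, 1/3, 1/6 (in the order (0,0),(0,1),(1,0),(1,1)), with entries ρ((0,0),(1,1)) = ρ((1,1),(0,0)) = -1/6, and all other entries zero. Then ρ is a two-qubit density matrix, det ρ = 0, and det(ρ^PT) = 1/432, so that det(ρ^PT) - det ρ = 1/432. -/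
open Matrix ComplexOrder

/-- The partial transpose of a two-qubit matrix: `ρ^PT((a,b),(c,d)) = ρ((a,d),(c,b))`. -/
def partialTranspose (ρ : Matrix (Fin 2 × Fin 2) (Fin 2 × Fin 2) ℂ) :
    Matrix (Fin 2 × Fin 2) (Fin 2 × Fin 2) ℂ :=
  fun p q => ρ (p.1, q.2) (q.1, p.2)

/-- A two-qubit density matrix: Hermitian positive semidefinite with trace one. -/
def IsTwoQubitDensityMatrix (ρ : Matrix (Fin 2 × Fin 2) (Fin 2 × Fin 2) ℂ) : Prop :=
  ρ.PosSemidef ∧ ρ.trace = 1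

/-- The matrix with diagonal `1/6, 1/3, 1/3, 1/6`, corner entries
`((0,0),(1,1))` and `((1,1),(0,0))` equal to `-1/6`, and zeros elsewhere. -/
noncomputable def ρ₉ : Matrix (Fin 2 × Fin 2) (Fin 2 × Fin 2) ℂ :=
  fun p q =>
    if p = q then (if p = (0, 0) ∨ p = (1, 1) then 1 / 6 else 1 / 3)
    else if (p = (0, 0) ∧ q = (1, 1)) ∨ (p = (1, 1) ∧ q = (0, 0)) then -1 / 6
    else 0

lemma ρ₉_herm : ρ₉.IsHermitian := by
  ext p q
  fin_cases p <;> fin_cases q <;>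
    simp [ρ₉, Matrix.conjTranspose_apply, Prod.ext_iff, Fin.ext_iff]

lemma ρ₉_quad (x : (Fin 2 × Fin 2) → ℂ) : 0 ≤ star x ⬝ᵥ ρ₉ *ᵥ x := by
  have h : star x ⬝ᵥ ρ₉ *ᵥ x =
      (1/6 : ℂ) * (star (x (0,0) - x (1,1)) * (x (0,0) - x (1,1)))
      + (1/3) * (star (x (0,1)) * (x (0,1))) + (1/3) * (star (x (1,0)) * (x (1,0))) := by
    simp [dotProduct, Matrix.mulVec, Fintype.sum_prod_type, Fin.sum_univ_succ, ρ₉,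
      Prod.ext_iff, Pi.star_apply, star_sub]
    ring
  rw [h]
  have h6 : (0:ℂ) ≤ 1/6 := by norm_num [Complex.le_def]
  have h3 : (0:ℂ) ≤ 1/3 := by norm_num [Complex.le_def]
  have := star_mul_self_nonneg (x (0,0) - x (1,1))
  have := star_mul_self_nonneg (x (0,1))
  have := star_mul_self_nonneg (x (1,0))
  positivity

lemma ρ₉_trace : ρ₉.trace = 1 := by
  simp [Matrix.trace, Fintype.sum_prod_type, Fin.sum_univ_succ, ρ₉, Matrix.diag]
  norm_num

lemma ρ₉_det : ρ₉.det = 0 := by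
  rw [← Matrix.det_submatrix_equiv_self finProdFinEquiv.symm ρ₉]
  simp [Matrix.det_succ_row_zero, Fin.sum_univ_succ, ρ₉, finProdFinEquiv,
    Fin.divNat, Fin.modNat, Prod.ext_iff]
  norm_num
  norm_num [show (Fin.succAbove (3 : Fin 4) (2 : Fin 3) : Fin 4) = 2 from by decide]

lemma ρ₉_pt_det : (partialTranspose ρ₉).det = 1 / 432 := by
  rw [← Matrix.det_submatrix_equiv_self finProdFinEquiv.symm]
  simp [Matrix.det_succ_row_zero, Fin.sum_univ_succ, partialTranspose, ρ₉, finProdFinEquiv,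
    Fin.divNat, Fin.modNat, Prod.ext_iff]
  norm_num

theorem stmt_9 :
    IsTwoQubitDensityMatrix ρ₉ ∧ ρ₉.det = 0 ∧ (partialTranspose ρ₉).det = 1 / 432 ∧
      (partialTranspose ρ₉).det - ρ₉.det = 1 / 432 := by
  refine ⟨⟨.of_dotProduct_mulVec_nonneg ρ₉_herm ρ₉_quad, ρ₉_trace⟩, ρ₉_det, ρ₉_pt_det, ?_⟩
  rw [ρ₉_det, ρ₉_pt_det, sub_zero]
end

section
/- For every two-qubit density matrix ρ, the determinant of its partial transpose satisfies -1/16 ≤ det(ρ^PT) ≤ 1/256 (where det(ρ^PT) is real, ρ^PT being Hermitian). -/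
open Matrix ComplexOrder

open Complex Finset

-- scalar lemmas
lemma amgm3 (a b c : ℝ) (ha : 0 ≤ a) (hb : 0 ≤ b) (hc : 0 ≤ c) :
    a * b * c ≤ ((a + b + c)/3)^3 := by
  nlinarith [sq_nonneg (a-b), sq_nonneg (b-c), sq_nonneg (a-c), sq_nonneg (a+b+c), mul_nonneg ha hb, mul_nonneg hb hc, mul_nonneg ha hc]

lemma prod4_upper (a b c d : ℝ) (ha : 0 ≤ a) (hb : 0 ≤ b) (hc : 0 ≤ c) (hd : 0 ≤ d)
    (hs : a + b + c + d = 1) : a * b * c * d ≤ 1/256 := by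
  have h1 : a * b ≤ ((a+b)/2)^2 := by nlinarith [sq_nonneg (a-b)]
  have h2 : c * d ≤ ((c+d)/2)^2 := by nlinarith [sq_nonneg (c-d)]
  have h3 : ((a+b)/2)^2 * ((c+d)/2)^2 ≤ 1/256 := by
    have h4 : ((a+b)/2) * ((c+d)/2) ≤ 1/16 := by nlinarith [sq_nonneg ((a+b)/2 - (c+d)/2)]
    have h5 : (0:ℝ) ≤ ((a+b)/2) * ((c+d)/2) := by positivity
    nlinarith
  calc a * b * c * d ≤ ((a+b)/2)^2 * (c*d) := by nlinarith [mul_nonneg hc hd]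
    _ ≤ ((a+b)/2)^2 * ((c+d)/2)^2 := by nlinarith [sq_nonneg ((a+b)/2)]
    _ ≤ 1/256 := h3

lemma prod4_lower (a b c d : ℝ) (ha : 0 ≤ a) (hb : 0 ≤ b) (hc : 0 ≤ c)
    (hd0 : d ≤ 0) (hd : -(1/2) ≤ d) (hs : a + b + c + d = 1) :
    -(1/16) ≤ a * b * c * d := by
  have habc : a * b * c ≤ ((1 - d)/3)^3 := by
    have := amgm3 a b c ha hb hc
    have h : a + b + c = 1 - d := by linarith
    rw [h] at this; exact this
  have h1 : d * ((1-d)/3)^3 ≤ a * b * c * d := by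
    have h2 : a * b * c * d = d * (a*b*c) := by ring
    rw [h2]
    have := mul_le_mul_of_nonpos_left habc hd0
    linarith
  have h3 : -(1/16) ≤ d * ((1-d)/3)^3 := by
    nlinarith [mul_nonneg (by linarith : (0:ℝ) ≤ 2*d+1) (by nlinarith : (0:ℝ) ≤ -8*d^3+28*d^2-38*d+27)]
  linarith

lemma prod4_bounds (a b c d : ℝ)
    (ha : -(1/2) ≤ a) (hb : -(1/2) ≤ b) (hc : -(1/2) ≤ c) (hd : -(1/2) ≤ d)
    (hab : 0 ≤ a ∨ 0 ≤ b) (hac : 0 ≤ a ∨ 0 ≤ c) (had : 0 ≤ a ∨ 0 ≤ d)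
    (hbc : 0 ≤ b ∨ 0 ≤ c) (hbd : 0 ≤ b ∨ 0 ≤ d) (hcd : 0 ≤ c ∨ 0 ≤ d)
    (hs : a + b + c + d = 1) :
    -(1/16) ≤ a * b * c * d ∧ a * b * c * d ≤ 1/256 := by
  rcases lt_or_ge a 0 with hA | hA
  · have hB : 0 ≤ b := hab.resolve_left (by linarith)
    have hC : 0 ≤ c := hac.resolve_left (by linarith)
    have hD : 0 ≤ d := had.resolve_left (by linarith)
    constructor
    · have := prod4_lower b c d a hB hC hD (le_of_lt hA) ha (by linarith)
      nlinarith [this]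
    · have : b * c * d * a ≤ 0 := mul_nonpos_of_nonneg_of_nonpos (by positivity) (le_of_lt hA)
      nlinarith [this]
  rcases lt_or_ge b 0 with hB | hB
  · have hC : 0 ≤ c := hbc.resolve_left (by linarith)
    have hD : 0 ≤ d := hbd.resolve_left (by linarith)
    constructor
    · have := prod4_lower a c d b hA hC hD (le_of_lt hB) hb (by linarith)
      nlinarith [this]
    · have : a * c * d * b ≤ 0 := mul_nonpos_of_nonneg_of_nonpos (by positivity) (le_of_lt hB)
      nlinarith [this]
  rcases lt_or_ge c 0 with hC | hC
  · have hD : 0 ≤ d := hcd.resolve_left (by linarith)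
    constructor
    · have := prod4_lower a b d c hA hB hD (le_of_lt hC) hc (by linarith)
      nlinarith [this]
    · have : a * b * d * c ≤ 0 := mul_nonpos_of_nonneg_of_nonpos (by positivity) (le_of_lt hC)
      nlinarith [this]
  rcases lt_or_ge d 0 with hD | hD
  · constructor
    · have := prod4_lower a b c d hA hB hC (le_of_lt hD) hd (by linarith)
      nlinarith [this]
    · have : a * b * c * d ≤ 0 := mul_nonpos_of_nonneg_of_nonpos (by positivity) (le_of_lt hD)
      nlinarith [this]
  exact ⟨by nlinarith [mul_nonneg (mul_nonneg (mul_nonneg hA hB) hC) hD],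
    prod4_upper a b c d hA hB hC hD hs⟩


lemma det2_abs_le (a b c d : ℂ) :
    2 * ‖a*d - b*c‖ ≤ normSq a + normSq b + normSq c + normSq d := by
  have h1 : ‖a*d - b*c‖ ≤ ‖a‖ * ‖d‖ + ‖b‖ * ‖c‖ := by
    calc ‖a*d - b*c‖ ≤ ‖a*d‖ + ‖b*c‖ := by
          simpa using norm_sub_le (a*d) (b*c)
      _ = ‖a‖ * ‖d‖ + ‖b‖ * ‖c‖ := by
          rw [norm_mul, norm_mul]
  nlinarith [sq_nonneg (‖a‖ - ‖d‖), sq_nonneg (‖b‖ - ‖c‖),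
    Complex.sq_norm a, Complex.sq_norm b, Complex.sq_norm c, Complex.sq_norm d]

lemma traceCC_lower (c00 c01 c10 c11 : ℂ) :
    -2 * ‖c00*c11 - c01*c10‖ ≤
      (c00 * (starRingEnd ℂ) c00 + c01 * (starRingEnd ℂ) c10 + c10 * (starRingEnd ℂ) c01
        + c11 * (starRingEnd ℂ) c11).re := by
  have e : (c00 * (starRingEnd ℂ) c00 + c01 * (starRingEnd ℂ) c10 + c10 * (starRingEnd ℂ) c01
        + c11 * (starRingEnd ℂ) c11).re
      = normSq c00 + normSq c11 + 2 * (c01 * (starRingEnd ℂ) c10).re := by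
    have h1 : c10 * (starRingEnd ℂ) c01 = (starRingEnd ℂ) (c01 * (starRingEnd ℂ) c10) := by
      rw [_root_.map_mul, Complex.conj_conj]; ring
    rw [Complex.add_re, Complex.add_re, Complex.add_re, Complex.mul_conj, Complex.mul_conj, h1,
      Complex.conj_re, Complex.ofReal_re, Complex.ofReal_re]
    ring
  rw [e]
  have h2 : -(‖c01‖ * ‖c10‖) ≤ (c01 * (starRingEnd ℂ) c10).re := by
    have h := Complex.abs_re_le_norm (c01 * (starRingEnd ℂ) c10)
    rw [norm_mul, Complex.norm_conj] at h
    have := neg_le_of_abs_le h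
    linarith
  have h3 : 2 * (‖c00‖ * ‖c11‖) ≤ normSq c00 + normSq c11 := by
    nlinarith [sq_nonneg (‖c00‖ - ‖c11‖), Complex.sq_norm c00, Complex.sq_norm c11]
  have h4 : ‖c01‖ * ‖c10‖ - ‖c00‖ * ‖c11‖
      ≤ ‖c00*c11 - c01*c10‖ := by
    have h := norm_sub_norm_le (c01*c10) (c00*c11)
    have h' : ‖c01*c10 - c00*c11‖ = ‖c00*c11 - c01*c10‖ := by
      rw [norm_sub_rev]
    rw [h'] at h
    calc ‖c01‖ * ‖c10‖ - ‖c00‖ * ‖c11‖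
        = ‖c01*c10‖ - ‖c00*c11‖ := by
          rw [norm_mul, norm_mul]
      _ ≤ ‖c00*c11 - c01*c10‖ := h
  linarith

lemma key_quad (ψ φ : Fin 2 × Fin 2 → ℂ) :
    -(1/2) * ((∑ i, normSq (ψ i)) * (∑ i, normSq (φ i))) ≤
      (∑ p : Fin 2 × Fin 2, ∑ q : Fin 2 × Fin 2,
        (starRingEnd ℂ) (φ p) * ψ (p.1, q.2) * (starRingEnd ℂ) (ψ (q.1, p.2)) * φ q).re := by
  set c : Fin 2 → Fin 2 → ℂ := fun b d =>
    (starRingEnd ℂ) (φ (0,b)) * ψ (0,d) + (starRingEnd ℂ) (φ (1,b)) * ψ (1,d) with hc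
  have eq1 : (∑ p : Fin 2 × Fin 2, ∑ q : Fin 2 × Fin 2,
        (starRingEnd ℂ) (φ p) * ψ (p.1, q.2) * (starRingEnd ℂ) (ψ (q.1, p.2)) * φ q)
      = c 0 0 * (starRingEnd ℂ) (c 0 0) + c 0 1 * (starRingEnd ℂ) (c 1 0)
        + c 1 0 * (starRingEnd ℂ) (c 0 1) + c 1 1 * (starRingEnd ℂ) (c 1 1) := by
    simp only [hc, Fintype.sum_prod_type, Fin.sum_univ_two, map_add, _root_.map_mul,
      Complex.conj_conj]
    ring
  rw [eq1]
  have key := traceCC_lower (c 0 0) (c 0 1) (c 1 0) (c 1 1)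
  have eq2 : c 0 0 * c 1 1 - c 0 1 * c 1 0
      = (starRingEnd ℂ) (φ (0,0) * φ (1,1) - φ (0,1) * φ (1,0))
        * (ψ (0,0) * ψ (1,1) - ψ (0,1) * ψ (1,0)) := by
    simp only [hc, map_sub, _root_.map_mul]
    ring
  have eq3 : ‖c 0 0 * c 1 1 - c 0 1 * c 1 0‖
      = ‖φ (0,0) * φ (1,1) - φ (0,1) * φ (1,0)‖
        * ‖ψ (0,0) * ψ (1,1) - ψ (0,1) * ψ (1,0)‖ := by
    rw [eq2, norm_mul, Complex.norm_conj]
  have hψ := det2_abs_le (ψ (0,0)) (ψ (0,1)) (ψ (1,0)) (ψ (1,1))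
  have hφ := det2_abs_le (φ (0,0)) (φ (0,1)) (φ (1,0)) (φ (1,1))
  have hP : (∑ i, normSq (ψ i)) = normSq (ψ (0,0)) + normSq (ψ (0,1)) + normSq (ψ (1,0)) + normSq (ψ (1,1)) := by
    simp [Fintype.sum_prod_type, Fin.sum_univ_two]; ring
  have hQ : (∑ i, normSq (φ i)) = normSq (φ (0,0)) + normSq (φ (0,1)) + normSq (φ (1,0)) + normSq (φ (1,1)) := by
    simp [Fintype.sum_prod_type, Fin.sum_univ_two]; ring
  rw [hP, hQ]
  rw [eq3] at key
  nlinarith [norm_nonneg (φ (0,0) * φ (1,1) - φ (0,1) * φ (1,0)),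
    norm_nonneg (ψ (0,0) * ψ (1,1) - ψ (0,1) * ψ (1,0)),
    Complex.normSq_nonneg (ψ (0,0)), Complex.normSq_nonneg (ψ (0,1)),
    Complex.normSq_nonneg (ψ (1,0)), Complex.normSq_nonneg (ψ (1,1)),
    Complex.normSq_nonneg (φ (0,0)), Complex.normSq_nonneg (φ (0,1)),
    Complex.normSq_nonneg (φ (1,0)), Complex.normSq_nonneg (φ (1,1)),
    mul_le_mul hφ hψ (mul_nonneg (by norm_num) (norm_nonneg _))
      (by nlinarith [Complex.normSq_nonneg (φ (0,0)), Complex.normSq_nonneg (φ (0,1)),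
        Complex.normSq_nonneg (φ (1,0)), Complex.normSq_nonneg (φ (1,1))])]


lemma exists_factor (m : Fin 2 × Fin 2 → ℂ)
    (h : m (0,0) * m (1,1) - m (0,1) * m (1,0) = 0) :
    ∃ u w : Fin 2 → ℂ, ∀ a b : Fin 2, m (a,b) = u a * w b := by
  by_cases h00 : m (0,0) = 0
  · have hprod : m (0,1) * m (1,0) = 0 := by
      have := h; rw [h00] at this; linear_combination -this
    by_cases h01 : m (0,1) = 0
    · exact ⟨![0,1], ![m (1,0), m (1,1)], by
        intro a b; fin_cases a <;> fin_cases b <;>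
          simp [-Prod.mk_zero_zero, -Prod.mk_one_one, h00, h01]⟩
    · have h10 : m (1,0) = 0 := by
        rcases mul_eq_zero.mp hprod with h' | h'
        · exact absurd h' h01
        · exact h'
      exact ⟨![m (0,1), m (1,1)], ![0, 1], by
        intro a b; fin_cases a <;> fin_cases b <;>
          simp [-Prod.mk_zero_zero, -Prod.mk_one_one, h00, h10]⟩
  · refine ⟨![m (0,0), m (1,0)], ![1, m (0,1) / m (0,0)], ?_⟩
    intro a b
    have h00' : m 0 ≠ 0 := h00
    have h' : m 0 * m 1 - m (0,1) * m (1,0) = 0 := h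
    fin_cases a <;> fin_cases b <;> simp [-Prod.mk_zero_zero, -Prod.mk_one_one]
    · field_simp
    · field_simp
      linear_combination h'

lemma quad_root (Da Db β : ℂ) :
    ∃ s t : ℂ, (s ≠ 0 ∨ t ≠ 0) ∧ Da * s^2 + β * (s*t) + Db * t^2 = 0 := by
  by_cases hDa : Da = 0
  · exact ⟨1, 0, Or.inl one_ne_zero, by simp [hDa]⟩
  · obtain ⟨z, hz⟩ := IsAlgClosed.exists_pow_nat_eq (β^2 - 4*Da*Db) (n := 2) (by norm_num)
    refine ⟨(-β + z)/(2*Da), 1, Or.inr one_ne_zero, ?_⟩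
    field_simp
    linear_combination hz

lemma pt_hermitian' {ρ : Matrix (Fin 2 × Fin 2) (Fin 2 × Fin 2) ℂ} (h : ρ.IsHermitian) :
    (partialTranspose ρ).IsHermitian := by
  ext p q
  have := congrFun (congrFun h (p.1, q.2)) (q.1, p.2)
  rw [conjTranspose_apply] at this ⊢
  simpa [partialTranspose] using this

lemma at_most_one_neg (ρ : Matrix (Fin 2 × Fin 2) (Fin 2 × Fin 2) ℂ) (hpsd : ρ.PosSemidef)
    (hσ : (partialTranspose ρ).IsHermitian) (i j : Fin 2 × Fin 2) (hij : i ≠ j)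
    (hi : hσ.eigenvalues i < 0) (hj : hσ.eigenvalues j < 0) : False := by
  set σ := partialTranspose ρ with hσdef
  set a : Fin 2 × Fin 2 → ℂ := ⇑(hσ.eigenvectorBasis i) with ha
  set b : Fin 2 × Fin 2 → ℂ := ⇑(hσ.eigenvectorBasis j) with hb
  have hmva : σ *ᵥ a = (hσ.eigenvalues i) • a := hσ.mulVec_eigenvectorBasis i
  have hmvb : σ *ᵥ b = (hσ.eigenvalues j) • b := hσ.mulVec_eigenvectorBasis j
  have hoaa : star a ⬝ᵥ a = 1 := by
    have h1 : (inner ℂ (hσ.eigenvectorBasis i) (hσ.eigenvectorBasis i) : ℂ) = 1 := by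
      rw [inner_self_eq_norm_sq_to_K, hσ.eigenvectorBasis.orthonormal.1 i]
      norm_num
    rw [dotProduct_comm]; exact h1
  have hobb : star b ⬝ᵥ b = 1 := by
    have h1 : (inner ℂ (hσ.eigenvectorBasis j) (hσ.eigenvectorBasis j) : ℂ) = 1 := by
      rw [inner_self_eq_norm_sq_to_K, hσ.eigenvectorBasis.orthonormal.1 j]
      norm_num
    rw [dotProduct_comm]; exact h1
  have hoab : star a ⬝ᵥ b = 0 := by rw [dotProduct_comm]; exact hσ.eigenvectorBasis.orthonormal.2 hij
  have hoba : star b ⬝ᵥ a = 0 := by rw [dotProduct_comm]; exact hσ.eigenvectorBasis.orthonormal.2 hij.symm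
  obtain ⟨s, t, hst, hroot⟩ := quad_root (a (0,0) * a (1,1) - a (0,1) * a (1,0))
    (b (0,0) * b (1,1) - b (0,1) * b (1,0))
    (a (0,0) * b (1,1) + b (0,0) * a (1,1) - a (0,1) * b (1,0) - b (0,1) * a (1,0))
  set ψ : Fin 2 × Fin 2 → ℂ := fun p => s * a p + t * b p with hψ
  have hdet : ψ (0,0) * ψ (1,1) - ψ (0,1) * ψ (1,0) = 0 := by
    simp only [hψ]
    linear_combination hroot
  obtain ⟨u, w, hf⟩ := exists_factor ψ hdet
  set φ : Fin 2 × Fin 2 → ℂ := fun p => u p.1 * (starRingEnd ℂ) (w p.2) with hφ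
  have h0 : (0:ℂ) ≤ star φ ⬝ᵥ (ρ *ᵥ φ) := hpsd.dotProduct_mulVec_nonneg φ
  have heq : star ψ ⬝ᵥ (σ *ᵥ ψ) = star φ ⬝ᵥ (ρ *ᵥ φ) := by
    simp only [dotProduct, mulVec, hσdef, partialTranspose, Pi.star_apply, Complex.star_def, hφ,
      Fintype.sum_prod_type, Fin.sum_univ_two, hf, _root_.map_mul, Complex.conj_conj]
    ring
  -- compute star ψ ⬝ᵥ (σ *ᵥ ψ)
  have hσψ : σ *ᵥ ψ = fun p => ((hσ.eigenvalues i : ℂ) * s) * a p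
      + ((hσ.eigenvalues j : ℂ) * t) * b p := by
    funext p
    have hsplit : (σ *ᵥ ψ) p = s * (σ *ᵥ a) p + t * (σ *ᵥ b) p := by
      simp only [mulVec, dotProduct, hψ]
      rw [Finset.mul_sum, Finset.mul_sum, ← Finset.sum_add_distrib]
      exact Finset.sum_congr rfl fun q _ => by ring
    rw [hsplit, hmva, hmvb]
    simp [Pi.smul_apply, Complex.real_smul]
    ring
  have hval : star ψ ⬝ᵥ (σ *ᵥ ψ)
      = ((normSq s * hσ.eigenvalues i + normSq t * hσ.eigenvalues j : ℝ) : ℂ) := by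
    rw [hσψ]
    have hexp : star ψ ⬝ᵥ (fun p => ((hσ.eigenvalues i : ℂ) * s) * a p
        + ((hσ.eigenvalues j : ℂ) * t) * b p)
        = ((hσ.eigenvalues i : ℂ) * s) * (star ψ ⬝ᵥ a)
          + ((hσ.eigenvalues j : ℂ) * t) * (star ψ ⬝ᵥ b) := by
      simp only [dotProduct, Finset.mul_sum, ← Finset.sum_add_distrib]
      exact Finset.sum_congr rfl fun q _ => by ring
    rw [hexp]
    have hsa : star ψ ⬝ᵥ a = (starRingEnd ℂ) s := by
      have : star ψ ⬝ᵥ a = (starRingEnd ℂ) s * (star a ⬝ᵥ a) + (starRingEnd ℂ) t * (star b ⬝ᵥ a) := by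
        simp only [dotProduct, Pi.star_apply, Complex.star_def, hψ, map_add, _root_.map_mul,
          Finset.mul_sum, ← Finset.sum_add_distrib]
        exact Finset.sum_congr rfl fun q _ => by ring
      rw [this, hoaa, hoba]; ring
    have hsb : star ψ ⬝ᵥ b = (starRingEnd ℂ) t := by
      have : star ψ ⬝ᵥ b = (starRingEnd ℂ) s * (star a ⬝ᵥ b) + (starRingEnd ℂ) t * (star b ⬝ᵥ b) := by
        simp only [dotProduct, Pi.star_apply, Complex.star_def, hψ, map_add, _root_.map_mul,
          Finset.mul_sum, ← Finset.sum_add_distrib]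
        exact Finset.sum_congr rfl fun q _ => by ring
      rw [this, hoab, hobb]; ring
    rw [hsa, hsb]
    rw [mul_assoc, mul_assoc, Complex.mul_conj, Complex.mul_conj]
    push_cast
    ring
  rw [hval] at heq
  have h0' : (0:ℝ) ≤ normSq s * hσ.eigenvalues i + normSq t * hσ.eigenvalues j := by
    have := h0
    rw [← heq, Complex.le_def] at this
    simpa using this.1
  rcases hst with hs | ht'
  · nlinarith [Complex.normSq_pos.mpr hs, Complex.normSq_nonneg t]
  · nlinarith [Complex.normSq_pos.mpr ht', Complex.normSq_nonneg s]


lemma pt_shift_psd (ρ : Matrix (Fin 2 × Fin 2) (Fin 2 × Fin 2) ℂ) (h : ρ.PosSemidef)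
    (ht : ρ.trace = 1) : (partialTranspose ρ + (1/2 : ℂ) • 1).PosSemidef := by
  obtain ⟨B, hB⟩ : ∃ B : Matrix (Fin 2 × Fin 2) (Fin 2 × Fin 2) ℂ, ρ = Bᴴ * B := by
    open scoped MatrixOrder in exact CStarAlgebra.nonneg_iff_eq_star_mul_self.mp h.nonneg
  have hherm : (partialTranspose ρ + (1/2 : ℂ) • 1).IsHermitian := by
    apply IsHermitian.add (pt_hermitian' h.1)
    unfold Matrix.IsHermitian
    rw [conjTranspose_smul, conjTranspose_one]
    norm_num
  refine .of_dotProduct_mulVec_nonneg hherm fun x => ?_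
  set M := partialTranspose ρ + (1/2 : ℂ) • (1 : Matrix (Fin 2 × Fin 2) (Fin 2 × Fin 2) ℂ) with hM
  rw [Complex.le_def]
  have him : star (star x ⬝ᵥ (M *ᵥ x)) = star x ⬝ᵥ (M *ᵥ x) := by
    rw [← star_dotProduct_star, star_star, star_mulVec, hherm.eq, ← dotProduct_mulVec]
  constructor
  swap
  · simp only [Complex.zero_im]
    have := Complex.conj_eq_iff_im.mp him
    exact this.symm
  · -- real part
    simp only [Complex.zero_re]
    have hsplit : star x ⬝ᵥ (M *ᵥ x) = star x ⬝ᵥ (partialTranspose ρ *ᵥ x)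
        + (1/2 : ℂ) * (star x ⬝ᵥ x) := by
      rw [hM, add_mulVec, smul_mulVec, one_mulVec, dotProduct_add, dotProduct_smul,
        smul_eq_mul]
    set Q : ℝ := ∑ i, normSq (x i) with hQ
    have hS : star x ⬝ᵥ x = (Q : ℂ) := by
      simp only [dotProduct, Pi.star_apply, Complex.star_def, hQ]
      push_cast
      refine Finset.sum_congr rfl fun i _ => ?_
      rw [mul_comm, Complex.mul_conj]
    have hT1 : star x ⬝ᵥ (partialTranspose ρ *ᵥ x)
        = ∑ k : Fin 2 × Fin 2, ∑ p : Fin 2 × Fin 2, ∑ q : Fin 2 × Fin 2,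
            (starRingEnd ℂ) (x p) * ((starRingEnd ℂ) (B k (p.1, q.2))) * (B k (q.1, p.2)) * x q := by
      simp only [dotProduct, mulVec, partialTranspose, hB, mul_apply, conjTranspose_apply,
        Pi.star_apply, Complex.star_def, Fintype.sum_prod_type, Fin.sum_univ_two]
      ring
    have hk : ∀ k : Fin 2 × Fin 2,
        -(1/2) * ((∑ i, normSq (B k i)) * Q) ≤
        (∑ p : Fin 2 × Fin 2, ∑ q : Fin 2 × Fin 2,
            (starRingEnd ℂ) (x p) * ((starRingEnd ℂ) (B k (p.1, q.2))) * (B k (q.1, p.2)) * x q).re := by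
      intro k
      have hkq := key_quad (fun i => (starRingEnd ℂ) (B k i)) x
      simp only [Complex.normSq_conj, Complex.conj_conj] at hkq
      exact hkq
    have htr : (∑ k : Fin 2 × Fin 2, ∑ i : Fin 2 × Fin 2, normSq (B k i)) = 1 := by
      have h1 := congrArg Complex.re ht
      simp only [trace, diag_apply, hB, mul_apply, conjTranspose_apply, Pi.star_apply,
        Complex.star_def, Complex.re_sum, Complex.one_re] at h1
      rw [← h1, Finset.sum_comm]
      refine Finset.sum_congr rfl fun i _ => Finset.sum_congr rfl fun k _ => ?_
      rw [mul_comm, Complex.mul_conj, Complex.ofReal_re]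
    have hge : -(1/2) * Q ≤ (star x ⬝ᵥ (partialTranspose ρ *ᵥ x)).re := by
      rw [hT1, Complex.re_sum]
      have hsum := Finset.sum_le_sum (fun k (_ : k ∈ Finset.univ) => hk k)
      calc -(1/2) * Q
          = ∑ k : Fin 2 × Fin 2, -(1/2) * ((∑ i, normSq (B k i)) * Q) := by
            rw [← Finset.mul_sum, ← Finset.sum_mul, htr]; ring
        _ ≤ _ := hsum
    have hre2 : ((1/2 : ℂ) * (Q : ℂ)).re = (1/2) * Q := by
      simp [Complex.mul_re]
    rw [hsplit, Complex.add_re, hS, hre2]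
    linarith



lemma eig_lower (ρ : Matrix (Fin 2 × Fin 2) (Fin 2 × Fin 2) ℂ) (hpsd : ρ.PosSemidef)
    (ht : ρ.trace = 1) (hσ : (partialTranspose ρ).IsHermitian) (i : Fin 2 × Fin 2) :
    -(1/2) ≤ hσ.eigenvalues i := by
  have hP := pt_shift_psd ρ hpsd ht
  set σ := partialTranspose ρ with hσdef
  set v : Fin 2 × Fin 2 → ℂ := ⇑(hσ.eigenvectorBasis i) with hv
  have hmv : σ *ᵥ v = (hσ.eigenvalues i) • v := hσ.mulVec_eigenvectorBasis i
  have hvv : star v ⬝ᵥ v = 1 := by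
    have h1 : (inner ℂ (hσ.eigenvectorBasis i) (hσ.eigenvectorBasis i) : ℂ) = 1 := by
      rw [inner_self_eq_norm_sq_to_K, hσ.eigenvectorBasis.orthonormal.1 i]
      norm_num
    rw [dotProduct_comm]; exact h1
  have h2 := hP.dotProduct_mulVec_nonneg v
  have h3 : star v ⬝ᵥ ((σ + (1/2 : ℂ) • 1) *ᵥ v) = ((hσ.eigenvalues i : ℂ) + 1/2) := by
    rw [add_mulVec, smul_mulVec, one_mulVec, dotProduct_add, dotProduct_smul,
      hmv, dotProduct_smul, hvv]
    simp [Complex.real_smul, smul_eq_mul]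
  rw [h3, Complex.le_def] at h2
  have := h2.1
  simp only [Complex.zero_re, Complex.add_re, Complex.ofReal_re] at this
  have h4 : ((1:ℂ)/2).re = 1/2 := by norm_num
  rw [h4] at this
  linarith

lemma sum_eig (σ : Matrix (Fin 2 × Fin 2) (Fin 2 × Fin 2) ℂ) (hσ : σ.IsHermitian)
    (ht : σ.trace = 1) : ∑ i, hσ.eigenvalues i = 1 := by
  have h1 : σ.trace = ∑ i, (hσ.eigenvalues i : ℂ) := by
    exact hσ.trace_eq_sum_eigenvalues
  rw [ht] at h1
  have h2 : ((∑ i, hσ.eigenvalues i : ℝ) : ℂ) = 1 := by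
    push_cast
    exact h1.symm
  exact_mod_cast h2


theorem stmt_13 (ρ : Matrix (Fin 2 × Fin 2) (Fin 2 × Fin 2) ℂ)
    (hρ : IsTwoQubitDensityMatrix ρ) :
    (-1 / 16 : ℂ) ≤ (partialTranspose ρ).det ∧ (partialTranspose ρ).det ≤ 1 / 256 := by
  obtain ⟨hpsd, htr⟩ := hρ
  have hσ : (partialTranspose ρ).IsHermitian := pt_hermitian' hpsd.1
  have htσ : (partialTranspose ρ).trace = 1 := by
    rw [← htr]
    unfold Matrix.trace
    refine Finset.sum_congr rfl fun p _ => ?_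
    simp [Matrix.diag, partialTranspose]
  have hsum : hσ.eigenvalues (0,0) + hσ.eigenvalues (0,1) + hσ.eigenvalues (1,0) + hσ.eigenvalues (1,1) = 1 := by
    have := sum_eig _ hσ htσ
    rw [Fintype.sum_prod_type] at this
    simp only [Fin.sum_univ_two] at this
    linarith
  have hlow : ∀ i, -(1/2) ≤ hσ.eigenvalues i := fun i => eig_lower ρ hpsd htr hσ i
  have hpair : ∀ i j, i ≠ j → 0 ≤ hσ.eigenvalues i ∨ 0 ≤ hσ.eigenvalues j := by
    intro i j hij
    by_contra hcon
    push_neg at hcon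
    exact at_most_one_neg ρ hpsd hσ i j hij hcon.1 hcon.2
  have hb := prod4_bounds (hσ.eigenvalues (0,0)) (hσ.eigenvalues (0,1)) (hσ.eigenvalues (1,0)) (hσ.eigenvalues (1,1))
    (hlow _) (hlow _) (hlow _) (hlow _)
    (hpair _ _ (by decide)) (hpair _ _ (by decide)) (hpair _ _ (by decide))
    (hpair _ _ (by decide)) (hpair _ _ (by decide)) (hpair _ _ (by decide)) hsum
  have hdet : (partialTranspose ρ).det
      = ((hσ.eigenvalues (0,0) * hσ.eigenvalues (0,1) * hσ.eigenvalues (1,0) * hσ.eigenvalues (1,1) : ℝ) : ℂ) := by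
    rw [hσ.det_eq_prod_eigenvalues, Fintype.prod_prod_type]
    simp only [Fin.prod_univ_two]
    norm_cast
    exact congrArg _ (mul_assoc _ _ _).symm
  rw [hdet]
  constructor
  · have : ((-1/16 : ℝ) : ℂ) ≤ ((hσ.eigenvalues (0,0) * hσ.eigenvalues (0,1) * hσ.eigenvalues (1,0) * hσ.eigenvalues (1,1) : ℝ) : ℂ) := by
      rw [Complex.real_le_real]
      linarith [hb.1]
    simpa using this
  · have : ((hσ.eigenvalues (0,0) * hσ.eigenvalues (0,1) * hσ.eigenvalues (1,0) * hσ.eigenvalues (1,1) : ℝ) : ℂ) ≤ ((1/256 : ℝ) : ℂ) := by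
      rw [Complex.real_le_real]
      linarith [hb.2]
    simpa using this
end

section
/- For every two-qubit density matrix ρ, the Hermitian matrix ρ^PT has at most one negative eigenvalue; that is, counting with multiplicity, at most one of the four real eigenvalues of ρ^PT is strictly negative. -/
open Matrix ComplexOrder

lemma quad_root_s15 (a b c : ℂ) :
    ∃ α β : ℂ, ¬(α = 0 ∧ β = 0) ∧ a*α^2 + b*α*β + c*β^2 = 0 := by
  by_cases ha : a = 0
  · exact ⟨1, 0, by simp, by simp [ha]⟩
  · obtain ⟨w, hw⟩ := IsAlgClosed.exists_pow_nat_eq (k := ℂ) (b^2 - 4*a*c) (n := 2) (by norm_num)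
    refine ⟨(w - b)/(2*a), 1, by simp, ?_⟩
    field_simp
    linear_combination hw

lemma rank_one_of_det (v : Fin 2 × Fin 2 → ℂ)
    (h : v (0,0) * v (1,1) = v (0,1) * v (1,0)) :
    ∃ a b : Fin 2 → ℂ, ∀ p : Fin 2 × Fin 2, v p = a p.1 * b p.2 := by
  by_cases h00 : v (0,0) = 0
  · by_cases h01 : v (0,1) = 0
    · refine ⟨![0, 1], ![v (1,0), v (1,1)], ?_⟩
      intro p; fin_cases p <;> simp_all
    · have h' : v (0,1) * v (1,0) = 0 := by rw [← h, h00, zero_mul]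
      have h10 : v (1,0) = 0 := by
        rcases mul_eq_zero.mp h' with h'' | h''
        · exact absurd h'' h01
        · exact h''
      refine ⟨![v (0,1), v (1,1)], ![0, 1], ?_⟩
      intro p; fin_cases p <;> simp_all
  · refine ⟨![v (0,0), v (1,0)], ![1, v (0,1) / v (0,0)], ?_⟩
    intro p; fin_cases p <;> simp_all
    · field_simp
    · field_simp; linear_combination h

lemma pt_quad (ρ : Matrix (Fin 2 × Fin 2) (Fin 2 × Fin 2) ℂ) (a b : Fin 2 → ℂ) :
    star (fun p : Fin 2 × Fin 2 => a p.1 * b p.2) ⬝ᵥ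
      (partialTranspose ρ *ᵥ fun p : Fin 2 × Fin 2 => a p.1 * b p.2) =
    star (fun p : Fin 2 × Fin 2 => a p.1 * star (b p.2)) ⬝ᵥ
      (ρ *ᵥ fun p : Fin 2 × Fin 2 => a p.1 * star (b p.2)) := by
  simp only [dotProduct, mulVec, partialTranspose, Pi.star_apply, star_mul', star_star,
    Fintype.sum_prod_type, Fin.sum_univ_two, Finset.mul_sum]
  ring

theorem stmt_15 (ρ : Matrix (Fin 2 × Fin 2) (Fin 2 × Fin 2) ℂ)
    (hρ : IsTwoQubitDensityMatrix ρ)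
    (hH : (partialTranspose ρ).IsHermitian) :
    (Finset.univ.filter fun i : Fin 2 × Fin 2 => hH.eigenvalues i < 0).card ≤ 1 := by
  by_contra hcard
  push_neg at hcard
  rw [Finset.one_lt_card] at hcard
  obtain ⟨i, hi, j, hj, hij⟩ := hcard
  simp only [Finset.mem_filter, Finset.mem_univ, true_and] at hi hj
  have horth : ∀ k l : Fin 2 × Fin 2,
      star ((WithLp.equiv 2 ((Fin 2 × Fin 2) → ℂ)) (hH.eigenvectorBasis k)) ⬝ᵥ
        ((WithLp.equiv 2 ((Fin 2 × Fin 2) → ℂ)) (hH.eigenvectorBasis l))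
      = if k = l then 1 else 0 := by
    intro k l
    have := orthonormal_iff_ite.mp hH.eigenvectorBasis.orthonormal k l
    rw [EuclideanSpace.inner_eq_star_dotProduct, dotProduct_comm] at this
    exact this
  have h1 := hH.mulVec_eigenvectorBasis i
  have h2 := hH.mulVec_eigenvectorBasis j
  have huu := horth i i; have huw := horth i j
  have hwu := horth j i; have hww := horth j j
  rw [if_pos rfl] at huu hww
  rw [if_neg hij] at huw
  rw [if_neg (Ne.symm hij)] at hwu
  set u : Fin 2 × Fin 2 → ℂ := (WithLp.equiv 2 ((Fin 2 × Fin 2) → ℂ)) (hH.eigenvectorBasis i) with hu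
  set w : Fin 2 × Fin 2 → ℂ := (WithLp.equiv 2 ((Fin 2 × Fin 2) → ℂ)) (hH.eigenvectorBasis j) with hw
  obtain ⟨α, β, hnz, hq⟩ := quad_root_s15 (u (0,0)*u (1,1) - u (0,1)*u (1,0))
      (u (0,0)*w (1,1) + w (0,0)*u (1,1) - u (0,1)*w (1,0) - w (0,1)*u (1,0))
      (w (0,0)*w (1,1) - w (0,1)*w (1,0))
  set v : Fin 2 × Fin 2 → ℂ := α • u + β • w with hv
  have hvp : ∀ p, v p = α * u p + β * w p := by
    intro p; simp [hv]
  have hdet : v (0,0) * v (1,1) = v (0,1) * v (1,0) := by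
    rw [hvp, hvp, hvp, hvp]
    linear_combination hq
  obtain ⟨a, b, hab⟩ := rank_one_of_det v hdet
  have hmv : partialTranspose ρ *ᵥ v
      = (α * (hH.eigenvalues i : ℂ)) • u + (β * (hH.eigenvalues j : ℂ)) • w := by
    rw [hv, mulVec_add, mulVec_smul, mulVec_smul, (show partialTranspose ρ *ᵥ u = hH.eigenvalues i • u from h1),
      (show partialTranspose ρ *ᵥ w = hH.eigenvalues j • w from h2),
      RCLike.real_smul_eq_coe_smul (K := ℂ), RCLike.real_smul_eq_coe_smul (K := ℂ),
      smul_smul, smul_smul]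
    norm_num
  have hQ : star v ⬝ᵥ (partialTranspose ρ *ᵥ v)
      = (starRingEnd ℂ α * α) * (hH.eigenvalues i : ℂ)
        + (starRingEnd ℂ β * β) * (hH.eigenvalues j : ℂ) := by
    rw [hmv, hv]
    simp only [star_add, star_smul, add_dotProduct, dotProduct_add, smul_dotProduct,
      dotProduct_smul, huu, huw, hwu, hww, smul_eq_mul, Complex.star_def]
    ring
  -- positivity from product structure
  have hvfun : v = fun p : Fin 2 × Fin 2 => a p.1 * b p.2 := funext hab
  have hpos : 0 ≤ star v ⬝ᵥ (partialTranspose ρ *ᵥ v) := by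
    rw [hvfun, pt_quad ρ a b]
    exact hρ.1.dotProduct_mulVec_nonneg _
  rw [hQ] at hpos
  rw [Complex.le_def] at hpos
  obtain ⟨hre, -⟩ := hpos
  simp only [Complex.conj_mul', ← Complex.ofReal_pow, Complex.add_re, Complex.mul_re,
    Complex.ofReal_re, Complex.ofReal_im, Complex.zero_re, mul_zero, sub_zero,
    zero_mul] at hre
  have hαβ : 0 < ‖α‖^2 ∨ 0 < ‖β‖^2 := by
    rcases not_and_or.mp hnz with h' | h'
    · left; exact pow_pos (norm_pos_iff.mpr h') 2
    · right; exact pow_pos (norm_pos_iff.mpr h') 2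
  have h0α : (0:ℝ) ≤ ‖α‖^2 := by positivity
  have h0β : (0:ℝ) ≤ ‖β‖^2 := by positivity
  rcases hαβ with h' | h' <;> nlinarith [hi, hj]
end
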